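/- The proposition ¬¬P ∨ ¬¬¬¬¬P has no constructive proof, where P is an atomic proposition. -/
import Mathlib


/-- Terms: de Bruijn variables and a binary function symbol (union). -/
inductive Tm : Type where
  | var : Nat → Tm
  | cup : Tm → Tm → Tm
deriving DecidableEq

def Tm.rename (f : Nat → Nat) : Tm → Tm
  | .var n => .var (f n)
  | .cup s t => .cup (s.rename f) (t.rename f)

def Tm.subst (σ : Nat → Tm) : Tm → Tm
  | .var n => σ n
  | .cup s t => .cup (s.subst σ) (t.subst σ)

/-- First-order formulas over Nat-indexed predicate symbols, de Bruijn binders. -/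
inductive Fm : Type where
  | atom : Nat → List Tm → Fm
  | top : Fm
  | bot : Fm
  | neg : Fm → Fm
  | and : Fm → Fm → Fm
  | or : Fm → Fm → Fm
  | imp : Fm → Fm → Fm
  | all : Fm → Fm
  | ex : Fm → Fm
deriving DecidableEq

def liftR (f : Nat → Nat) : Nat → Nat
  | 0 => 0
  | n + 1 => f n + 1

def liftS (σ : Nat → Tm) : Nat → Tm
  | 0 => .var 0
  | n + 1 => (σ n).rename Nat.succ

def Fm.rename (f : Nat → Nat) : Fm → Fm
  | .atom p l => .atom p (l.map (Tm.rename f))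
  | .top => .top
  | .bot => .bot
  | .neg A => .neg (A.rename f)
  | .and A B => .and (A.rename f) (B.rename f)
  | .or A B => .or (A.rename f) (B.rename f)
  | .imp A B => .imp (A.rename f) (B.rename f)
  | .all A => .all (A.rename (liftR f))
  | .ex A => .ex (A.rename (liftR f))

def Fm.subst (σ : Nat → Tm) : Fm → Fm
  | .atom p l => .atom p (l.map (Tm.subst σ))
  | .top => .top
  | .bot => .bot
  | .neg A => .neg (A.subst σ)
  | .and A B => .and (A.subst σ) (B.subst σ)
  | .or A B => .or (A.subst σ) (B.subst σ)
  | .imp A B => .imp (A.subst σ) (B.subst σ)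
  | .all A => .all (A.subst (liftS σ))
  | .ex A => .ex (A.subst (liftS σ))

/-- Shift all free variables up by one. -/
def Fm.shift (A : Fm) : Fm := A.rename Nat.succ

/-- Instantiate the outermost bound variable with term `t` : `(t/x)A`. -/
def Fm.inst (t : Tm) (A : Fm) : Fm :=
  A.subst (fun n => match n with | 0 => t | n + 1 => .var n)

/-- Double negation. -/
def Fm.dn (A : Fm) : Fm := .neg (.neg A)

/-- Cut-free classical multi-conclusion sequent calculus (Figure 1). -/
inductive Cl : List Fm → List Fm → Prop where
  | ax (A : Fm) : Cl [A] [A]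
  | perm {Γ Γ' Δ Δ'} : Γ.Perm Γ' → Δ.Perm Δ' → Cl Γ Δ → Cl Γ' Δ'
  | contrL {Γ Δ A} : Cl (A :: A :: Γ) Δ → Cl (A :: Γ) Δ
  | contrR {Γ Δ A} : Cl Γ (A :: A :: Δ) → Cl Γ (A :: Δ)
  | weakL {Γ Δ A} : Cl Γ Δ → Cl (A :: Γ) Δ
  | weakR {Γ Δ A} : Cl Γ Δ → Cl Γ (A :: Δ)
  | topR {Γ Δ} : Cl Γ (.top :: Δ)
  | botL {Γ Δ} : Cl (.bot :: Γ) Δ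
  | negL {Γ Δ A} : Cl Γ (A :: Δ) → Cl (.neg A :: Γ) Δ
  | negR {Γ Δ A} : Cl (A :: Γ) Δ → Cl Γ (.neg A :: Δ)
  | andL {Γ Δ A B} : Cl (A :: B :: Γ) Δ → Cl (.and A B :: Γ) Δ
  | andR {Γ Δ A B} : Cl Γ (A :: Δ) → Cl Γ (B :: Δ) → Cl Γ (.and A B :: Δ)
  | orL {Γ Δ A B} : Cl (A :: Γ) Δ → Cl (B :: Γ) Δ → Cl (.or A B :: Γ) Δ
  | orR1 {Γ Δ A B} : Cl Γ (A :: Δ) → Cl Γ (.or A B :: Δ)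
  | orR2 {Γ Δ A B} : Cl Γ (B :: Δ) → Cl Γ (.or A B :: Δ)
  | impL {Γ Δ A B} : Cl Γ (A :: Δ) → Cl (B :: Γ) Δ → Cl (.imp A B :: Γ) Δ
  | impR {Γ Δ A B} : Cl (A :: Γ) (B :: Δ) → Cl Γ (.imp A B :: Δ)
  | allL {Γ Δ A} (t : Tm) : Cl (A.inst t :: Γ) Δ → Cl (.all A :: Γ) Δ
  | allR {Γ Δ A} : Cl (Γ.map Fm.shift) (A :: Δ.map Fm.shift) → Cl Γ (.all A :: Δ)
  | exL {Γ Δ A} : Cl (A :: Γ.map Fm.shift) (Δ.map Fm.shift) → Cl (.ex A :: Γ) Δ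
  | exR {Γ Δ A} (t : Tm) : Cl Γ (A.inst t :: Δ) → Cl Γ (.ex A :: Δ)

/-- Constructive (intuitionistic) single-conclusion sequent calculus:
the restriction of the classical calculus to sequents with at most one
conclusion, with the adapted ⇒-left rule. -/
inductive Intu : List Fm → Option Fm → Prop where
  | ax (A : Fm) : Intu [A] (some A)
  | perm {Γ Γ' Δ} : Γ.Perm Γ' → Intu Γ Δ → Intu Γ' Δ
  | contrL {Γ Δ A} : Intu (A :: A :: Γ) Δ → Intu (A :: Γ) Δ
  | weakL {Γ Δ A} : Intu Γ Δ → Intu (A :: Γ) Δ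
  | weakR {Γ A} : Intu Γ none → Intu Γ (some A)
  | topR {Γ} : Intu Γ (some .top)
  | botL {Γ Δ} : Intu (.bot :: Γ) Δ
  | negL {Γ A} : Intu Γ (some A) → Intu (.neg A :: Γ) none
  | negR {Γ A} : Intu (A :: Γ) none → Intu Γ (some (.neg A))
  | andL {Γ Δ A B} : Intu (A :: B :: Γ) Δ → Intu (.and A B :: Γ) Δ
  | andR {Γ A B} : Intu Γ (some A) → Intu Γ (some B) → Intu Γ (some (.and A B))
  | orL {Γ Δ A B} : Intu (A :: Γ) Δ → Intu (B :: Γ) Δ → Intu (.or A B :: Γ) Δ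
  | orR1 {Γ A B} : Intu Γ (some A) → Intu Γ (some (.or A B))
  | orR2 {Γ A B} : Intu Γ (some B) → Intu Γ (some (.or A B))
  | impL {Γ Δ A B} : Intu Γ (some A) → Intu (B :: Γ) Δ → Intu (.imp A B :: Γ) Δ
  | impR {Γ A B} : Intu (A :: Γ) (some B) → Intu Γ (some (.imp A B))
  | allL {Γ Δ A} (t : Tm) : Intu (A.inst t :: Γ) Δ → Intu (.all A :: Γ) Δ
  | allR {Γ A} : Intu (Γ.map Fm.shift) (some A) → Intu Γ (some (.all A))
  | exL {Γ Δ A} : Intu (A :: Γ.map Fm.shift) (Δ.map Fm.shift) → Intu (.ex A :: Γ) Δ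
  | exR {Γ A} (t : Tm) : Intu Γ (some (A.inst t)) → Intu Γ (some (.ex A))

/-- Dowek's translation ‖·‖: double negations both before and after each
connective and quantifier, atoms unchanged. -/
def Fm.bar : Fm → Fm
  | .atom p l => .atom p l
  | .top => Fm.dn .top
  | .bot => Fm.dn .bot
  | .neg A => Fm.dn (Fm.dn (.neg A.bar))
  | .and A B => Fm.dn (.and (Fm.dn A.bar) (Fm.dn B.bar))
  | .or A B => Fm.dn (.or (Fm.dn A.bar) (Fm.dn B.bar))
  | .imp A B => Fm.dn (.imp (Fm.dn A.bar) (Fm.dn B.bar))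
  | .all A => Fm.dn (.all (Fm.dn A.bar))
  | .ex A => Fm.dn (.ex (Fm.dn A.bar))

/-- The light translation |·|: like ‖·‖ but the outermost double negation
is removed. -/
def Fm.light : Fm → Fm
  | .atom p l => .atom p l
  | .top => .top
  | .bot => .bot
  | .neg A => .neg (Fm.dn A.bar)
  | .and A B => .and (Fm.dn A.bar) (Fm.dn B.bar)
  | .or A B => .or (Fm.dn A.bar) (Fm.dn B.bar)
  | .imp A B => .imp (Fm.dn A.bar) (Fm.dn B.bar)
  | .all A => .all (Fm.dn A.bar)
  | .ex A => .ex (Fm.dn A.bar)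

/-- A formula is atomic if it is of the form `atom p l`. -/
def Fm.isAtom : Fm → Prop
  | .atom _ _ => True
  | _ => False


section Aux

open TopologicalSpace

abbrev OO := Opens ℝ

def ev9 (I : Nat → OO) : Fm → OO
  | .atom p _ => I p
  | .top => ⊤
  | .bot => ⊥
  | .neg A => ev9 I A ⇨ ⊥
  | .and A B => ev9 I A ⊓ ev9 I B
  | .or A B => ev9 I A ⊔ ev9 I B
  | .imp A B => ev9 I A ⇨ ev9 I B
  | .all A => ev9 I A
  | .ex A => ev9 I A

def sem9 (I : Nat → OO) : List Fm → OO
  | [] => ⊤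
  | A :: Γ => ev9 I A ⊓ sem9 I Γ

def semO9 (I : Nat → OO) : Option Fm → OO
  | none => ⊥
  | some A => ev9 I A

lemma ev9_rename (I : Nat → OO) (A : Fm) (f : Nat → Nat) :
    ev9 I (A.rename f) = ev9 I A := by
  induction A generalizing f <;> simp [Fm.rename, ev9, *]

lemma ev9_subst (I : Nat → OO) (A : Fm) (σ : Nat → Tm) :
    ev9 I (A.subst σ) = ev9 I A := by
  induction A generalizing σ <;> simp [Fm.subst, ev9, *]

lemma ev9_shift (I : Nat → OO) (A : Fm) : ev9 I A.shift = ev9 I A :=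
  ev9_rename I A _

lemma ev9_inst (I : Nat → OO) (A : Fm) (t : Tm) : ev9 I (A.inst t) = ev9 I A :=
  ev9_subst I A _

lemma sem9_perm (I : Nat → OO) {Γ Γ' : List Fm} (h : Γ.Perm Γ') :
    sem9 I Γ = sem9 I Γ' := by
  induction h with
  | nil => rfl
  | cons _ _ ih => simp [sem9, ih]
  | swap a b l => simp [sem9, inf_left_comm]
  | trans _ _ ih1 ih2 => rw [ih1, ih2]

lemma sem9_shift (I : Nat → OO) (Γ : List Fm) :
    sem9 I (Γ.map Fm.shift) = sem9 I Γ := by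
  induction Γ with
  | nil => rfl
  | cons A Γ ih => simp [sem9, ev9_shift, ih]

lemma semO9_shift (I : Nat → OO) (Δ : Option Fm) :
    semO9 I (Δ.map Fm.shift) = semO9 I Δ := by
  cases Δ <;> simp [semO9, ev9_shift]

theorem sound9 (I : Nat → OO) {Γ : List Fm} {Δ : Option Fm} (h : Intu Γ Δ) :
    sem9 I Γ ≤ semO9 I Δ := by
  induction h with
  | ax A => exact inf_le_left
  | perm hp _ ih => rwa [sem9_perm I hp] at ih
  | contrL _ ih =>
      refine le_trans ?_ ih
      exact le_inf inf_le_left le_rfl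
  | weakL _ ih => exact inf_le_right.trans ih
  | weakR _ ih => exact ih.trans bot_le
  | topR => exact le_top
  | botL => exact inf_le_left.trans bot_le
  | negL _ ih =>
      simp only [sem9, semO9, ev9] at *
      exact le_trans (inf_le_inf_left _ ih) himp_inf_le
  | negR _ ih =>
      simp only [semO9, ev9]
      rw [le_himp_iff, inf_comm]
      exact ih
  | andL _ ih =>
      simp only [sem9, ev9] at *
      rwa [inf_assoc]
  | andR _ _ ih1 ih2 => exact le_inf ih1 ih2
  | orL _ _ ih1 ih2 =>
      simp only [sem9, ev9] at *
      rw [inf_sup_right]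
      exact sup_le ih1 ih2
  | orR1 _ ih => exact ih.trans le_sup_left
  | orR2 _ ih => exact ih.trans le_sup_right
  | impL _ _ ih1 ih2 =>
      simp only [sem9, ev9] at *
      calc (ev9 I _ ⇨ ev9 I _) ⊓ sem9 I _
          ≤ ((ev9 I _ ⇨ ev9 I _) ⊓ ev9 I _) ⊓ sem9 I _ := by
            refine le_inf (le_inf inf_le_left (inf_le_right.trans ih1)) inf_le_right
        _ ≤ ev9 I _ ⊓ sem9 I _ := inf_le_inf_right _ himp_inf_le
        _ ≤ _ := ih2
  | impR _ ih =>
      simp only [semO9, ev9] at *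
      rw [le_himp_iff, inf_comm]
      exact ih
  | allL t _ ih => simpa [sem9, ev9, ev9_inst] using ih
  | allR _ ih =>
      simp only [semO9, ev9] at *
      rwa [sem9_shift] at ih
  | exL _ ih =>
      simp only [sem9] at *
      rwa [sem9_shift, semO9_shift] at ih
  | exR t _ ih => simpa [semO9, ev9, ev9_inst] using ih

end Aux

theorem stmt9 (P : Fm) (hP : P.isAtom) :
    ¬ Intu [] (some (.or (Fm.dn P) (Fm.dn (Fm.dn (.neg P))))) := by
  intro h
  obtain ⟨p, l, rfl⟩ : ∃ p l, P = .atom p l := by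
    cases P <;> first | exact ⟨_, _, rfl⟩ | simp [Fm.isAtom] at hP
  set U : OO := ⟨Set.Ioi 0, isOpen_Ioi⟩ with hU
  have hs := sound9 (fun _ => U) h
  simp only [sem9, semO9, ev9, Fm.dn, himp_bot, compl_compl_compl] at hs
  -- hs : ⊤ ≤ Uᶜᶜ ⊔ Uᶜ
  have h0 : (0 : ℝ) ∈ (Uᶜᶜ ⊔ Uᶜ : OO) := hs (TopologicalSpace.Opens.mem_top 0)
  have hmem : ∀ (V : OO), V ⊓ U = ⊥ → (0:ℝ) ∉ V := by
    intro V hV h0V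
    obtain ⟨ε, hε, hball⟩ := Metric.isOpen_iff.mp V.2 0 h0V
    have hx : (ε/2 : ℝ) ∈ (V : Set ℝ) := by
      apply hball
      simp [Metric.mem_ball, Real.dist_eq, abs_of_pos, half_pos hε]
      have := abs_of_pos hε
      linarith
    have hxU : (ε/2 : ℝ) ∈ (U : Set ℝ) := by
      simp [hU, Set.mem_Ioi]; linarith
    have : (ε/2 : ℝ) ∈ (V ⊓ U : OO) := ⟨hx, hxU⟩
    rw [hV] at this
    exact this
  have hW : (⟨Set.Iio 0, isOpen_Iio⟩ : OO) ≤ Uᶜ := by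
    rw [le_compl_iff_disjoint_right, disjoint_iff]
    apply TopologicalSpace.Opens.ext
    simp [hU, Set.Iio_inter_Ioi]
  have hcc : (0:ℝ) ∉ (Uᶜᶜ : OO) := by
    intro h0V
    obtain ⟨ε, hε, hball⟩ := Metric.isOpen_iff.mp (Uᶜᶜ : OO).2 0 h0V
    have hx : (-(ε/2) : ℝ) ∈ ((Uᶜᶜ : OO) : Set ℝ) := by
      apply hball
      simp [Metric.mem_ball, Real.dist_eq, abs_of_pos, half_pos hε]
      have := abs_of_pos hε
      linarith
    have hxc : (-(ε/2) : ℝ) ∈ ((Uᶜ : OO) : Set ℝ) := hW (by simp [Set.mem_Iio]; linarith)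
    have : (-(ε/2) : ℝ) ∈ (Uᶜ ⊓ Uᶜᶜ : OO) := ⟨hxc, hx⟩
    rw [inf_compl_self] at this
    exact this
  have hc : (0:ℝ) ∉ (Uᶜ : OO) := hmem _ (by rw [inf_comm]; exact inf_compl_self U)
  rcases h0 with h0 | h0
  · exact hcc h0
  · exact hc h0
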